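/- Let K ⊂ ℝ^n be a compact convex set with nonempty interior, let μ be the Lebesgue measure restricted to K, let f_0, f_1, …, f_p be polynomials on ℝ^n, and let b_1, …, b_p ∈ ℝ. Suppose the problem of moments val := inf over Borel probability measures P supported on K with ∫_K f_i dP = b_i for i = 1,…,p of ∫_K f_0 dP is attained by some feasible probability measure. Then for every ε > 0 there exist d ∈ ℕ and an SOS density h of degree 2d (with respect to μ) such that |∫_K f_0(z) h(z) dμ(z) − val| < ε and |∫_K f_i(z) h(z) dμ(z) − b_i| < ε for all i = 1, …, p. -/

import Mathlib

open MeasureTheory MvPolynomial Filter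

noncomputable section

/-- A polynomial is a sum of squares of polynomials each of total degree at most `r`
(hence itself of degree at most `2r`). -/
def IsSOS {m : ℕ} (r : ℕ) (h : MvPolynomial (Fin m) ℝ) : Prop :=
  ∃ (N : ℕ) (q : Fin N → MvPolynomial (Fin m) ℝ),
    h = ∑ j, q j ^ 2 ∧ ∀ j, (q j).totalDegree ≤ r

lemma vol_inter_ball_pos {n : ℕ} {K : Set (Fin n → ℝ)} (hconv : Convex ℝ K)
    (hKint : (interior K).Nonempty) {x : Fin n → ℝ} (hx : x ∈ K) {s : ℝ} (hs : 0 < s) :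
    0 < volume (K ∩ Metric.ball x s) := by
  obtain ⟨y, hy⟩ := hKint
  have hd : (0:ℝ) ≤ dist y x := dist_nonneg
  set t : ℝ := min 1 (s / (2 * (dist y x + 1))) with ht
  have ht0 : 0 < t := lt_min one_pos (by positivity)
  have ht1 : t ≤ 1 := min_le_left _ _
  set w := t • y + (1 - t) • x with hw
  have hwint : w ∈ interior K :=
    hconv.combo_interior_closure_mem_interior hy (subset_closure hx) ht0 (by linarith) (by ring)
  have hdist : dist w x < s / 2 := by
    have hwx : w - x = t • (y - x) := by rw [hw]; module
    rw [dist_eq_norm, hwx, norm_smul, Real.norm_eq_abs, abs_of_pos ht0]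
    have h2 : t ≤ s / (2 * (dist y x + 1)) := min_le_right _ _
    have h3 : ‖y - x‖ = dist y x := (dist_eq_norm y x).symm
    rw [h3]
    calc t * dist y x ≤ (s / (2 * (dist y x + 1))) * dist y x := by
          apply mul_le_mul_of_nonneg_right h2 hd
      _ < s / 2 := by
          rw [div_mul_eq_mul_div, div_lt_div_iff₀ (by positivity) (by norm_num)]
          nlinarith
  obtain ⟨δ, hδ0, hδ⟩ := Metric.isOpen_iff.1 isOpen_interior w hwint
  set δ' := min δ (s/2) with hδ'
  have hδ'0 : 0 < δ' := lt_min hδ0 (by positivity)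
  have hsub : Metric.ball w δ' ⊆ K ∩ Metric.ball x s := by
    intro z hz
    rw [Metric.mem_ball] at hz
    constructor
    · exact interior_subset (hδ (Metric.mem_ball.2 (lt_of_lt_of_le hz (min_le_left _ _))))
    · rw [Metric.mem_ball]
      calc dist z x ≤ dist z w + dist w x := dist_triangle _ _ _
        _ < s/2 + s/2 := add_lt_add (lt_of_lt_of_le hz (min_le_right _ _)) hdist
        _ = s := by ring
  calc (0:ENNReal) < volume (Metric.ball w δ') := Metric.measure_ball_pos _ _ hδ'0
    _ ≤ volume (K ∩ Metric.ball x s) := measure_mono hsub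

lemma concentration {n : ℕ} {K : Set (Fin n → ℝ)} (hK : IsCompact K)
    {u : (Fin n → ℝ) → ℝ} (hu : Continuous u) {x0 : Fin n → ℝ} (hx0 : x0 ∈ K)
    (hpos : ∀ z ∈ K, 0 < u z) (hle : ∀ z ∈ K, u z ≤ 1)
    (hsep : ∀ r > (0:ℝ), ∃ θ : ℝ, 0 ≤ θ ∧ θ < 1 ∧ ∀ z ∈ K, r ≤ dist z x0 → u z ≤ θ)
    (hnear : ∀ θ : ℝ, 0 ≤ θ → θ < 1 → ∃ (A : Set (Fin n → ℝ)) (β : ℝ),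
      MeasurableSet A ∧ A ⊆ K ∧ 0 < volume A ∧ θ < β ∧ ∀ z ∈ A, β ≤ u z)
    {φ : (Fin n → ℝ) → ℝ} (hφ : Continuous φ) :
    (∀ d : ℕ, 0 < ∫ z in K, (u z) ^ d) ∧
    Tendsto (fun d : ℕ => (∫ z in K, φ z * (u z) ^ d) / (∫ z in K, (u z) ^ d)) atTop
      (nhds (φ x0)) := by
  have hKm : MeasurableSet K := hK.measurableSet
  have hIntOn : ∀ (ψ : (Fin n → ℝ) → ℝ), Continuous ψ → IntegrableOn ψ K volume :=
    fun ψ hψ => hψ.continuousOn.integrableOn_compact hK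
  have hIu : ∀ d : ℕ, IntegrableOn (fun z => u z ^ d) K volume :=
    fun d => hIntOn _ (hu.pow d)
  have hlower : ∀ (A : Set (Fin n → ℝ)) (β : ℝ), MeasurableSet A → A ⊆ K → 0 ≤ β →
      (∀ z ∈ A, β ≤ u z) → ∀ d : ℕ,
      β ^ d * (volume A).toReal ≤ ∫ z in K, (u z) ^ d := by
    intro A β hAm hAK hβ0 hβu d
    have hIA : IntegrableOn (fun z => u z ^ d) A volume := (hIu d).mono_set hAK
    have h1 : β ^ d * (volume A).toReal = ∫ _ in A, β ^ d := by
      rw [setIntegral_const]; rw [smul_eq_mul, measureReal_def]; ring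
    rw [h1]
    calc ∫ _ in A, β ^ d ≤ ∫ z in A, u z ^ d := by
          apply setIntegral_mono_on (integrableOn_const ?_) hIA hAm
          · intro z hz
            exact pow_le_pow_left₀ hβ0 (hβu z hz) d
          · exact (lt_of_le_of_lt (measure_mono hAK) hK.measure_lt_top).ne
      _ ≤ ∫ z in K, u z ^ d := by
          apply setIntegral_mono_set (hIu d) ?_ (HasSubset.Subset.eventuallyLE hAK)
          · filter_upwards [ae_restrict_mem hKm] with z hz
            exact pow_nonneg (hpos z hz).le d
  obtain ⟨A0, β0, hA0m, hA0K, hA0v, hβ0pos, hβ0u⟩ := hnear 0 le_rfl one_pos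
  have hA0fin : volume A0 ≠ ⊤ := (lt_of_le_of_lt (measure_mono hA0K) hK.measure_lt_top).ne
  have hA0r : 0 < (volume A0).toReal := ENNReal.toReal_pos hA0v.ne' hA0fin
  have hIpos : ∀ d : ℕ, 0 < ∫ z in K, (u z) ^ d := by
    intro d
    have : 0 < β0 ^ d * (volume A0).toReal := by positivity
    linarith [hlower A0 β0 hA0m hA0K hβ0pos.le hβ0u d]
  refine ⟨hIpos, ?_⟩
  rw [Metric.tendsto_atTop]
  intro ε hε
  obtain ⟨C, hC⟩ := hK.exists_bound_of_continuousOn ((hφ.sub continuous_const).continuousOn)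
  have hC0 : 0 ≤ C := le_trans (norm_nonneg _) (hC x0 hx0)
  have hcont : ContinuousAt φ x0 := hφ.continuousAt
  rw [Metric.continuousAt_iff] at hcont
  obtain ⟨r, hr0, hr⟩ := hcont (ε/2) (by positivity)
  obtain ⟨θ, hθ0, hθ1, hθ⟩ := hsep r hr0
  obtain ⟨A, β, hAm, hAK, hAv, hθβ, hβu⟩ := hnear θ hθ0 hθ1
  have hβpos : 0 < β := lt_of_le_of_lt hθ0 hθβ
  have hAfin : volume A ≠ ⊤ := (lt_of_le_of_lt (measure_mono hAK) hK.measure_lt_top).ne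
  have hAr : 0 < (volume A).toReal := ENNReal.toReal_pos hAv.ne' hAfin
  set volA := (volume A).toReal with hvolA
  set volK := (volume K).toReal with hvolK
  have hvolK0 : 0 ≤ volK := ENNReal.toReal_nonneg
  have hratio : 0 ≤ θ / β ∧ θ / β < 1 := ⟨div_nonneg hθ0 hβpos.le, (div_lt_one hβpos).2 hθβ⟩
  have hdecay : Tendsto (fun d : ℕ => (C * volK / volA) * (θ/β)^d) atTop (nhds 0) := by
    have := tendsto_pow_atTop_nhds_zero_of_lt_one hratio.1 hratio.2
    simpa using this.const_mul (C * volK / volA)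
  have hev : ∀ᶠ d : ℕ in atTop, (C * volK / volA) * (θ/β)^d < ε/2 :=
    hdecay.eventually (gt_mem_nhds (by positivity))
  obtain ⟨N, hN⟩ := eventually_atTop.1 hev
  refine ⟨N, fun d hd => ?_⟩
  set Id := ∫ z in K, (u z) ^ d with hId
  set Jd := ∫ z in K, φ z * (u z) ^ d with hJd
  have hIdpos : 0 < Id := hIpos d
  have hkey : |Jd - φ x0 * Id| ≤ ε/2 * Id + C * θ^d * volK := by
    have hsub : Jd - φ x0 * Id = ∫ z in K, (φ z - φ x0) * (u z)^d := by
      rw [hJd, hId, ← integral_const_mul]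
      rw [← integral_sub (hIntOn (fun z => φ z * u z ^ d) (hφ.mul (hu.pow d))) ((hIu d).const_mul (φ x0))]
      congr 1; ext z; ring
    rw [hsub]
    calc |∫ z in K, (φ z - φ x0) * (u z)^d|
        ≤ ∫ z in K, |φ z - φ x0| * |u z|^d := by
          simpa [Real.norm_eq_abs, abs_mul, abs_pow] using
            norm_integral_le_integral_norm (μ := volume.restrict K)
              (fun z => (φ z - φ x0) * (u z)^d)
      _ ≤ ∫ z in K, (ε/2 * (u z)^d + C * θ^d) := by
          refine setIntegral_mono_on
            (hIntOn _ (((hφ.sub continuous_const).abs).mul ((hu.abs).pow d)))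
            (hIntOn _ ((continuous_const.mul (hu.pow d)).add continuous_const)) hKm fun z hz => ?_
          have hu0 : 0 ≤ u z := (hpos z hz).le
          have hupow : 0 ≤ (u z)^d := pow_nonneg hu0 d
          rw [abs_of_nonneg hu0]
          rcases lt_or_ge (dist z x0) r with hlt | hge
          · have h1 : |φ z - φ x0| ≤ ε/2 := by
              have := hr hlt
              rw [Real.dist_eq] at this
              linarith
            have h2 : 0 ≤ C * θ^d := by positivity
            nlinarith [mul_le_mul_of_nonneg_right h1 hupow]
          · have h1 : |φ z - φ x0| ≤ C := by
              have := hC z hz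
              simpa [Real.norm_eq_abs] using this
            have h2 : (u z)^d ≤ θ^d := pow_le_pow_left₀ hu0 (hθ z hz hge) d
            have h3 : 0 ≤ ε/2 * (u z)^d := by positivity
            nlinarith [mul_le_mul_of_nonneg_right h1 hupow,
              mul_le_mul_of_nonneg_left h2 hC0]
      _ = ε/2 * Id + C * θ^d * volK := by
          rw [integral_add ((hIu d).const_mul (ε/2)) (integrableOn_const hK.measure_lt_top.ne)]
          rw [integral_const_mul, setIntegral_const, smul_eq_mul, hId, measureReal_def]
          ring
  have hIdlow : β ^ d * volA ≤ Id := hlower A β hAm hAK hβpos.le hβu d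
  rw [Real.dist_eq]
  have heq : Jd / Id - φ x0 = (Jd - φ x0 * Id) / Id := by
    field_simp
  rw [heq, abs_div, abs_of_pos hIdpos, div_lt_iff₀ hIdpos]
  have htail : C * θ^d * volK ≤ (C * volK / volA) * (θ/β)^d * Id := by
    have hβd : (0:ℝ) < β ^ d := pow_pos hβpos d
    have h4 : (C * volK / volA) * (θ/β)^d * (β ^ d * volA) = C * θ^d * volK := by
      rw [div_pow]
      field_simp
    calc C * θ^d * volK = (C * volK / volA) * (θ/β)^d * (β^d * volA) := h4.symm
      _ ≤ (C * volK / volA) * (θ/β)^d * Id :=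
          mul_le_mul_of_nonneg_left hIdlow (by positivity)
  have hNd := hN d hd
  calc |Jd - φ x0 * Id| ≤ ε/2 * Id + C * θ^d * volK := hkey
    _ ≤ ε/2 * Id + (C * volK / volA) * (θ/β)^d * Id := by linarith
    _ < ε/2 * Id + ε/2 * Id := by
        have := mul_lt_mul_of_pos_right hNd hIdpos
        linarith
    _ = ε * Id := by ring

lemma uP_eval {n : ℕ} (M : ℝ) (c : Fin n → ℝ) (z : Fin n → ℝ) :
    eval z ((C 1 + C (-(1/M)) * ∑ j, (X j + C (-(c j)))^2 : MvPolynomial (Fin n) ℝ))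
      = 1 - (∑ j, (z j - c j)^2)/M := by
  simp only [map_add, map_mul, map_pow, map_sum, eval_C, eval_X, ← sub_eq_add_neg]
  ring

lemma uP_deg {n : ℕ} (M : ℝ) (c : Fin n → ℝ) :
    ((C 1 + C (-(1/M)) * ∑ j, (X j + C (-(c j)))^2 : MvPolynomial (Fin n) ℝ)).totalDegree ≤ 2 := by
  refine le_trans (totalDegree_add _ _) (max_le ?_ ?_)
  · simp [totalDegree_C]
  · refine le_trans (totalDegree_mul _ _) ?_
    rw [totalDegree_C, zero_add]
    refine le_trans (totalDegree_finset_sum _ _) (Finset.sup_le fun j _ => ?_)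
    refine le_trans (totalDegree_pow _ _) ?_
    have : (X j + C (-(c j)) : MvPolynomial (Fin n) ℝ).totalDegree ≤ 1 := by
      refine le_trans (totalDegree_add _ _) (max_le ?_ ?_)
      · simp [totalDegree_X]
      · simp [totalDegree_C]
    omega

theorem moment_problem_approx_by_sos_density
    {n : ℕ} (p : ℕ) (K : Set (Fin n → ℝ)) (hK : IsCompact K)
    (hconv : Convex ℝ K) (hKint : (interior K).Nonempty)
    (f0 : MvPolynomial (Fin n) ℝ) (f : Fin p → MvPolynomial (Fin n) ℝ) (b : Fin p → ℝ)
    (Feas : Measure (Fin n → ℝ) → Prop)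
    (hFeas : ∀ P : Measure (Fin n → ℝ), Feas P ↔ IsProbabilityMeasure P ∧ P Kᶜ = 0 ∧
      ∀ i, (∫ z, eval z (f i) ∂P) = b i)
    (val : ℝ)
    (hval : val = sInf {v : ℝ | ∃ P, Feas P ∧ v = ∫ z, eval z f0 ∂P})
    (hatt : ∃ P, Feas P ∧ (∫ z, eval z f0 ∂P) = val) :
    ∀ ε > (0 : ℝ), ∃ (d : ℕ) (h : MvPolynomial (Fin n) ℝ), IsSOS d h ∧
      (∫ z in K, eval z h) = 1 ∧
      |(∫ z in K, eval z f0 * eval z h) - val| < ε ∧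
      ∀ i, |(∫ z in K, eval z (f i) * eval z h) - b i| < ε := by
  intro ε hε
  have hKm : MeasurableSet K := hK.measurableSet
  have hIntOn : ∀ (ψ : (Fin n → ℝ) → ℝ), Continuous ψ → IntegrableOn ψ K volume :=
    fun ψ hψ => hψ.continuousOn.integrableOn_compact hK
  obtain ⟨P, hPfeas, hPval⟩ := hatt
  rw [hFeas] at hPfeas
  obtain ⟨hPprob, hPK, hPmom⟩ := hPfeas
  haveI := hPprob
  set g : Fin (p+1) → MvPolynomial (Fin n) ℝ := Fin.cons f0 f with hg
  set F : (Fin n → ℝ) → (Fin (p+1) → ℝ) := fun z i => eval z (g i) with hF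
  set v : Fin (p+1) → ℝ := Fin.cons val b with hv
  have hFicont : ∀ i, Continuous fun z => F z i := fun i => MvPolynomial.continuous_eval _
  have hFcont : Continuous F := continuous_pi hFicont
  have hKae : ∀ᵐ z ∂P, z ∈ K := by
    rw [ae_iff]
    exact hPK
  -- integrability of F
  obtain ⟨Cb, hCb⟩ := hK.exists_bound_of_continuousOn hFcont.continuousOn
  have hFint : Integrable F P := by
    refine Integrable.mono' (integrable_const (max Cb 0)) hFcont.aestronglyMeasurable ?_
    filter_upwards [hKae] with z hz
    exact le_trans (hCb z hz) (le_max_left _ _)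
  -- the moment vector belongs to the closed convex hull
  have hgval : ∫ z, F z ∂P = v := by
    funext i
    have hproj := (ContinuousLinearMap.proj (R := ℝ) (φ := fun _ : Fin (p+1) => ℝ) i).integral_comp_comm hFint
    have happ : (∫ z, F z ∂P) i = ∫ z, F z i ∂P := hproj.symm
    rw [happ]
    refine Fin.cases ?_ ?_ i
    · simpa [hF, hg, hv] using hPval
    · intro j
      simpa [hF, hg, hv] using hPmom j
  have hvmem : v ∈ closure (convexHull ℝ (F '' K)) := by
    rw [← hgval]
    refine (convex_convexHull ℝ (F '' K)).closure.integral_mem isClosed_closure ?_ hFint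
    filter_upwards [hKae] with z hz
    exact subset_closure (subset_convexHull ℝ _ (Set.mem_image_of_mem F hz))
  obtain ⟨v', hv'mem, hv'dist⟩ := Metric.mem_closure_iff.1 hvmem (ε/3) (by positivity)
  rw [convexHull_eq] at hv'mem
  obtain ⟨ι, t, w, zf, hw0, hw1, hzf, hcm⟩ := hv'mem
  have hxc : ∀ k ∈ t, ∃ xx, xx ∈ K ∧ F xx = zf k := by
    intro k hk
    rcases hzf k hk with ⟨xx, hxx, hFxx⟩
    exact ⟨xx, hxx, hFxx⟩
  choose! x hxK hxF using hxc
  have hv'i : ∀ i, v' i = ∑ k ∈ t, w k * F (x k) i := by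
    intro i
    rw [← hcm, Finset.centerMass_eq_of_sum_1 _ _ hw1, Finset.sum_apply]
    refine Finset.sum_congr rfl fun k hk => ?_
    rw [Pi.smul_apply, smul_eq_mul, ← hxF k hk]
  -- the localizing functions
  set M : ℝ := n * (Metric.diam K)^2 + 1 with hM
  have hM0 : 0 < M := by positivity
  set uu : ι → (Fin n → ℝ) → ℝ := fun k z => 1 - (∑ j, (z j - x k j)^2)/M with huu
  have he0 : ∀ (k : ι) (z : Fin n → ℝ), 0 ≤ ∑ j, (z j - x k j)^2 :=
    fun k z => Finset.sum_nonneg fun j _ => sq_nonneg _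
  have hucont : ∀ k, Continuous (uu k) := by
    intro k
    refine continuous_const.sub (Continuous.div_const ?_ M)
    exact continuous_finset_sum _ fun j _ => ((continuous_apply j).sub continuous_const).pow 2
  have heM : ∀ k ∈ t, ∀ z ∈ K, (∑ j, (z j - x k j)^2) < M := by
    intro k hk z hz
    have hle : ∀ j : Fin n, (z j - x k j)^2 ≤ (Metric.diam K)^2 := by
      intro j
      have h1 : dist (z j) (x k j) ≤ dist z (x k) := dist_le_pi_dist _ _ _
      have h2 : dist z (x k) ≤ Metric.diam K :=
        Metric.dist_le_diam_of_mem hK.isBounded hz (hxK k hk)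
      have h3 : |z j - x k j| ≤ Metric.diam K := by
        rw [← Real.dist_eq]; exact le_trans h1 h2
      calc (z j - x k j)^2 = |z j - x k j|^2 := (sq_abs _).symm
        _ ≤ (Metric.diam K)^2 := by
            exact pow_le_pow_left₀ (abs_nonneg _) h3 2
    calc (∑ j, (z j - x k j)^2) ≤ ∑ _j : Fin n, (Metric.diam K)^2 :=
          Finset.sum_le_sum fun j _ => hle j
      _ = n * (Metric.diam K)^2 := by
          rw [Finset.sum_const, Finset.card_univ, Fintype.card_fin, nsmul_eq_mul]
      _ < M := by rw [hM]; linarith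
  -- concentration for each atom and each coordinate
  have hmain : ∀ k ∈ t, ∀ i : Fin (p+1),
      (∀ d : ℕ, 0 < ∫ z in K, (uu k z) ^ d) ∧
      Tendsto (fun d : ℕ => (∫ z in K, F z i * (uu k z) ^ d) / (∫ z in K, (uu k z) ^ d))
        atTop (nhds (F (x k) i)) := by
    intro k hk i
    refine concentration hK (hucont k) (hxK k hk) ?_ ?_ ?_ ?_ (hFicont i)
    · intro z hz
      have := heM k hk z hz
      rw [huu]
      have : (∑ j, (z j - x k j)^2)/M < 1 := (div_lt_one hM0).2 this
      linarith
    · intro z hz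
      have h1 : 0 ≤ (∑ j, (z j - x k j)^2)/M := div_nonneg (he0 k z) hM0.le
      rw [huu]; dsimp only; linarith
    · intro r hr
      refine ⟨max (1 - r^2/M) 0, le_max_right _ _, ?_, ?_⟩
      · refine max_lt ?_ one_pos
        have : 0 < r^2/M := by positivity
        linarith
      · intro z hz hrz
        have he : r^2 ≤ ∑ j, (z j - x k j)^2 := by
          have hsq : dist z (x k) ≤ Real.sqrt (∑ j, (z j - x k j)^2) := by
            rw [dist_pi_le_iff (Real.sqrt_nonneg _)]
            intro j
            rw [Real.dist_eq, ← Real.sqrt_sq_eq_abs]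
            refine Real.sqrt_le_sqrt ?_
            exact Finset.single_le_sum (f := fun j => (z j - x k j)^2)
              (fun j _ => sq_nonneg _) (Finset.mem_univ j)
          have := le_trans hrz hsq
          calc r^2 ≤ Real.sqrt (∑ j, (z j - x k j)^2)^2 :=
                pow_le_pow_left₀ hr.le this 2
            _ = ∑ j, (z j - x k j)^2 := Real.sq_sqrt (he0 k z)
        refine le_trans ?_ (le_max_left _ _)
        rw [huu]; dsimp only
        gcongr
    · intro θ hθ0 hθ1
      have h1θ : (0:ℝ) < 1 - θ := by linarith
      set s : ℝ := Real.sqrt ((1-θ)*M/(2*(n+1))) with hs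
      have hsarg : 0 < (1-θ)*M/(2*(n+1)) := div_pos (mul_pos h1θ hM0) (by positivity)
      have hs0 : 0 < s := Real.sqrt_pos.2 hsarg
      have hs2 : s^2 = (1-θ)*M/(2*(n+1)) := Real.sq_sqrt hsarg.le
      refine ⟨K ∩ Metric.ball (x k) s, 1 - n * s^2 / M,
        hKm.inter measurableSet_ball, Set.inter_subset_left,
        vol_inter_ball_pos hconv hKint (hxK k hk) hs0, ?_, ?_⟩
      · rw [hs2]
        have h4 : (n:ℝ) * ((1-θ)*M/(2*(n+1))) / M = n*(1-θ)/(2*(n+1)) := by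
          field_simp
        rw [h4]
        have h5 : (n:ℝ)*(1-θ)/(2*(n+1)) < 1 - θ := by
          rw [div_lt_iff₀ (by positivity)]
          nlinarith
        linarith
      · intro z hz
        obtain ⟨hzK, hzb⟩ := hz
        have hdz : dist z (x k) ≤ s := (Metric.mem_ball.1 hzb).le
        have he : (∑ j, (z j - x k j)^2) ≤ n * s^2 := by
          have hle : ∀ j : Fin n, (z j - x k j)^2 ≤ s^2 := by
            intro j
            have h1 : dist (z j) (x k j) ≤ dist z (x k) := dist_le_pi_dist _ _ _
            have h3 : |z j - x k j| ≤ s := by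
              rw [← Real.dist_eq]; exact le_trans h1 hdz
            calc (z j - x k j)^2 = |z j - x k j|^2 := (sq_abs _).symm
              _ ≤ s^2 := pow_le_pow_left₀ (abs_nonneg _) h3 2
          calc (∑ j, (z j - x k j)^2) ≤ ∑ _j : Fin n, s^2 :=
                Finset.sum_le_sum fun j _ => hle j
            _ = n * s^2 := by
                rw [Finset.sum_const, Finset.card_univ, Fintype.card_fin, nsmul_eq_mul]
        rw [huu]; dsimp only
        gcongr
  -- choose a uniform degree
  have hev : ∀ᶠ d : ℕ in atTop, ∀ k ∈ t, ∀ i : Fin (p+1),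
      |(∫ z in K, F z i * (uu k z) ^ d) / (∫ z in K, (uu k z) ^ d) - F (x k) i| < ε/3 := by
    rw [eventually_all_finset]
    intro k hk
    rw [eventually_all]
    intro i
    have htd := (hmain k hk i).2
    have hball := htd (Metric.ball_mem_nhds (F (x k) i) (by positivity : (0:ℝ) < ε/3))
    filter_upwards [hball] with d hd
    simpa [Real.dist_eq] using hd
  obtain ⟨D, hD⟩ := eventually_atTop.1 hev
  set I : ι → ℝ := fun k => ∫ z in K, (uu k z) ^ (2*D) with hI
  set J : ι → Fin (p+1) → ℝ := fun k i => ∫ z in K, F z i * (uu k z) ^ (2*D) with hJ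
  have hQ : ∀ k ∈ t, ∀ i, |J k i / I k - F (x k) i| < ε/3 :=
    fun k hk i => hD (2*D) (by omega) k hk i
  have hIpos : ∀ k ∈ t, 0 < I k := fun k hk => (hmain k hk 0).1 (2*D)
  have hIne : ∀ k ∈ t, I k ≠ 0 := fun k hk => (hIpos k hk).ne'
  set uP : ι → MvPolynomial (Fin n) ℝ :=
    fun k => C 1 + C (-(1/M)) * ∑ j, (X j + C (-(x k j)))^2 with huP
  have hevalu : ∀ k z, eval z (uP k) = uu k z := fun k z => uP_eval M (x k) z
  set q : ι → MvPolynomial (Fin n) ℝ :=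
    fun k => C (Real.sqrt (w k / I k)) * (uP k)^D with hq
  set h : MvPolynomial (Fin n) ℝ := ∑ k ∈ t, q k ^ 2 with hh
  have hevalh : ∀ z, eval z h = ∑ k ∈ t, (w k / I k) * (uu k z)^(2*D) := by
    intro z
    rw [hh, map_sum]
    refine Finset.sum_congr rfl fun k hk => ?_
    rw [map_pow, hq]
    dsimp only
    rw [map_mul, eval_C, map_pow, hevalu]
    rw [mul_pow, ← pow_mul, Real.sq_sqrt (div_nonneg (hw0 k hk) (hIpos k hk).le)]
    rw [Nat.mul_comm D 2]
  have hnorm : (∫ z in K, eval z h) = 1 := by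
    rw [setIntegral_congr_fun hKm (fun z _ => hevalh z)]
    rw [integral_finset_sum t (f := fun k z => (w k / I k) * (uu k z)^(2*D)) (fun k _ => ((hIntOn _ ((hucont k).pow (2*D))).const_mul _))]
    calc ∑ k ∈ t, ∫ z in K, (w k / I k) * (uu k z)^(2*D)
        = ∑ k ∈ t, w k := by
          refine Finset.sum_congr rfl fun k hk => ?_
          rw [integral_const_mul]
          exact div_mul_cancel₀ _ (hIne k hk)
      _ = 1 := hw1
  have hkey : ∀ i : Fin (p+1), |(∫ z in K, F z i * eval z h) - v i| < ε := by
    intro i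
    have hsplit : (∫ z in K, F z i * eval z h)
        = ∑ k ∈ t, w k * (J k i / I k) := by
      have h1 : (∫ z in K, F z i * eval z h)
          = ∫ z in K, ∑ k ∈ t, (w k / I k) * (F z i * (uu k z)^(2*D)) := by
        refine setIntegral_congr_fun hKm fun z _ => ?_
        rw [hevalh z, Finset.mul_sum]
        refine Finset.sum_congr rfl fun k _ => ?_
        ring
      rw [h1, integral_finset_sum t (f := fun k z => (w k / I k) * (F z i * (uu k z)^(2*D)))
        (fun k _ => ((hIntOn _ ((hFicont i).mul ((hucont k).pow (2*D)))).const_mul _))]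
      refine Finset.sum_congr rfl fun k hk => ?_
      rw [integral_const_mul, div_mul_eq_mul_div, mul_div_assoc]
    rw [hsplit]
    have hd1 : |∑ k ∈ t, w k * (J k i / I k) - v' i| ≤ ε/3 := by
      rw [hv'i i, ← Finset.sum_sub_distrib]
      calc |∑ k ∈ t, (w k * (J k i / I k) - w k * F (x k) i)|
          ≤ ∑ k ∈ t, |w k * (J k i / I k) - w k * F (x k) i| := Finset.abs_sum_le_sum_abs _ _
        _ ≤ ∑ k ∈ t, w k * (ε/3) := by
            refine Finset.sum_le_sum fun k hk => ?_
            rw [← mul_sub, abs_mul, abs_of_nonneg (hw0 k hk)]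
            exact mul_le_mul_of_nonneg_left (hQ k hk i).le (hw0 k hk)
        _ = ε/3 := by rw [← Finset.sum_mul, hw1, one_mul]
    have hd2 : |v' i - v i| < ε/3 := by
      have hle := dist_le_pi_dist v' v i
      have h2 : dist v' v < ε/3 := by rw [dist_comm]; exact hv'dist
      rw [Real.dist_eq] at hle
      linarith
    calc |∑ k ∈ t, w k * (J k i / I k) - v i|
        ≤ |∑ k ∈ t, w k * (J k i / I k) - v' i| + |v' i - v i| := abs_sub_le _ _ _
      _ < ε/3 + ε/3 := by
          exact add_lt_add_of_le_of_lt hd1 hd2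
      _ ≤ ε := by linarith
  have hIsSOS : IsSOS (2*D) h := by
    refine ⟨t.card, fun j => q ((t.equivFin.symm j : {x // x ∈ t}) : ι), ?_, ?_⟩
    · rw [hh, ← Finset.sum_coe_sort t (fun k => q k ^ 2)]
      exact (Equiv.sum_comp t.equivFin.symm (fun a : {x // x ∈ t} => q (a : ι) ^ 2)).symm
    · intro j
      rw [hq]
      dsimp only
      refine le_trans (totalDegree_mul _ _) ?_
      rw [totalDegree_C, zero_add]
      refine le_trans (totalDegree_pow _ _) ?_
      calc D * (uP _).totalDegree ≤ D * 2 := Nat.mul_le_mul_left D (uP_deg M (x _))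
        _ = 2*D := Nat.mul_comm D 2
  refine ⟨2*D, h, hIsSOS, hnorm, ?_, ?_⟩
  · have hk0 := hkey 0
    simpa [hF, hg, hv, Fin.cons_zero] using hk0
  · intro i
    have hki := hkey i.succ
    simpa [hF, hg, hv, Fin.cons_succ] using hki
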